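/- arXiv:1308.5018 — 2 statements merged into one kernel-verified Lean document; each statement's English description precedes it below -/
import Mathlib

section
/- The map y ↦ x defined by x^k_j = (-1)^k Σ_K (-1)^p y^{k_1}_{j+(k_2+...+k_p)n} ⋯ y^{k_{p-1}}_{j+k_p n} y^{k_p}_j (sum over compositions K of k) is an involution: substituting x back through the same formula recovers y, i.e. y^k_j = (-1)^k Σ_K (-1)^p x^{k_1}_{j+(k_2+...+k_p)n} ⋯ x^{k_{p-1}}_{j+k_p n} x^{k_p}_j. -/
open Finset

/-- The finset of compositions of `k` into `p` positive parts, encoded as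
functions `Fin p → Fin (k+1)`. -/
def comps (k p : ℕ) : Finset (Fin p → Fin (k + 1)) :=
  Finset.univ.filter fun K => (∀ i, 1 ≤ (K i : ℕ)) ∧ (∑ i, (K i : ℕ)) = k

/-- Partial sum `k_1 + ⋯ + k_{i-1}` of the parts of a composition before index `i`. -/
def prefSum {k p : ℕ} (K : Fin p → Fin (k + 1)) (i : Fin p) : ℤ :=
  ∑ j ∈ Finset.Iio i, ((K j : ℕ) : ℤ)

/-- Partial sum `k_{i+1} + ⋯ + k_p` of the parts of a composition after index `i`. -/
def sufSum {k p : ℕ} (K : Fin p → Fin (k + 1)) (i : Fin p) : ℤ :=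
  ∑ j ∈ Finset.Ioi i, ((K j : ℕ) : ℤ)

/-- The multivariate polynomial
`T^k_s = Σ_K Σ_{0 ≤ λ_1 < ⋯ < λ_p ≤ s-1} y^{k_1}_{λ_1 h} ⋯ y^{k_p}_{λ_p h + (k_1+⋯+k_{p-1})n}`,
summed over compositions `K = (k_1,…,k_p)` of `k`. -/
def Tpoly {R : Type*} [CommRing R] (y : ℕ → ℤ → R) (n h : ℤ) (k s : ℕ) : R :=
  ∑ p ∈ Finset.Icc 1 k, ∑ K ∈ comps k p,
    ∑ lam ∈ Finset.univ.filter (fun lam : Fin p → Fin s => ∀ i j, i < j → lam i < lam j),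
      ∏ i, y ((K i : ℕ)) (((lam i : ℕ) : ℤ) * h + prefSum K i * n)

/-- The multivariate polynomial
`S^k_s = (-1)^k Σ_K (-1)^p Σ_{0 ≤ λ_1 ≤ ⋯ ≤ λ_p ≤ s-1}
  y^{k_1}_{λ_1 h + (k_2+⋯+k_p)n} ⋯ y^{k_p}_{λ_p h}`,
summed over compositions `K = (k_1,…,k_p)` of `k`. -/
def Spoly {R : Type*} [CommRing R] (y : ℕ → ℤ → R) (n h : ℤ) (k s : ℕ) : R :=
  (-1) ^ k * ∑ p ∈ Finset.Icc 1 k, (-1) ^ p *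
    ∑ K ∈ comps k p,
      ∑ lam ∈ Finset.univ.filter (fun lam : Fin p → Fin s => ∀ i j, i ≤ j → lam i ≤ lam j),
        ∏ i, y ((K i : ℕ)) (((lam i : ℕ) : ℤ) * h + sufSum K i * n)

/-- The shift of variables `y^r_j ↦ y^r_{j+α}`. -/
def shiftVar {R : Type*} (y : ℕ → ℤ → R) (α : ℤ) : ℕ → ℤ → R := fun r j => y r (j + α)

/-- The variables `x^k_j = (-1)^k Σ_K (-1)^p y^{k_1}_{j+(k_2+⋯+k_p)n} ⋯ y^{k_p}_j`
(sum over compositions `K` of `k`), i.e. `x^k_j = S^{k,j}_1`. -/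
def Xvar {R : Type*} [CommRing R] (y : ℕ → ℤ → R) (n : ℤ) (k : ℕ) (j : ℤ) : R :=
  (-1) ^ k * ∑ p ∈ Finset.Icc 1 k, (-1) ^ p *
    ∑ K ∈ comps k p, ∏ i, y ((K i : ℕ)) (j + sufSum K i * n)

/-! ### Auxiliary machinery for the involution proof -/

lemma mem_comps_iff {c p : ℕ} {K : Fin p → Fin (c + 1)} :
    K ∈ comps c p ↔ (∀ i, 1 ≤ (K i : ℕ)) ∧ (∑ i, (K i : ℕ)) = c := by
  simp [comps]

lemma comps_empty {c p : ℕ} (h : c < p) : comps c p = ∅ := by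
  ext K
  simp only [mem_comps_iff, Finset.notMem_empty, iff_false, not_and]
  intro h1 h2
  have : p ≤ ∑ i, (K i : ℕ) := by
    calc p = ∑ _i : Fin p, 1 := by simp
    _ ≤ _ := Finset.sum_le_sum fun i _ => h1 i
  omega

/-- Forward map for splitting a composition into head and tail. -/
def compFwd (c q : ℕ) (K : Fin (q + 1) → Fin (c + 1)) : Σ h : ℕ, Fin q → Fin (c - h + 1) :=
  ⟨(K 0 : ℕ), fun a =>
    ⟨min (K a.succ : ℕ) (c - (K 0 : ℕ)), Nat.lt_succ_of_le (min_le_right _ _)⟩⟩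

/-- Backward map: prepend a head to a composition. -/
def compBwd (c q : ℕ) (x : Σ h : ℕ, Fin q → Fin (c - h + 1)) : Fin (q + 1) → Fin (c + 1) :=
  Fin.cons ⟨min x.1 c, Nat.lt_succ_of_le (min_le_right _ _)⟩
    (fun a => ⟨min (x.2 a : ℕ) c, Nat.lt_succ_of_le (min_le_right _ _)⟩)

lemma sigma_mk_eq {c q : ℕ} {a b : ℕ} (h : a = b) (f : Fin q → Fin (c - a + 1))
    (g : Fin q → Fin (c - b + 1)) (hfg : ∀ i, (f i : ℕ) = (g i : ℕ)) :
    (⟨a, f⟩ : Σ m : ℕ, Fin q → Fin (c - m + 1)) = ⟨b, g⟩ := by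
  subst h
  exact congrArg _ (funext fun i => Fin.ext (hfg i))

section Aux
variable {R : Type*} [CommRing R]

/-- The inner composition sum appearing in `Xvar`. -/
def CF (y : ℕ → ℤ → R) (n j : ℤ) (c p : ℕ) : R :=
  ∑ K ∈ comps c p, ∏ i, y ((K i : ℕ)) (j + sufSum K i * n)

lemma CF_empty (y : ℕ → ℤ → R) (n j : ℤ) {c p : ℕ} (h : c < p) : CF y n j c p = 0 := by
  rw [CF, comps_empty h, Finset.sum_empty]

lemma CF_one (y : ℕ → ℤ → R) (n j : ℤ) {c : ℕ} (hc : 1 ≤ c) : CF y n j c 1 = y c j := by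
  have hs : comps c 1 = {fun _ => (⟨c, Nat.lt_succ_self c⟩ : Fin (c + 1))} := by
    ext K
    simp only [mem_comps_iff, Finset.mem_singleton, Fin.sum_univ_one]
    constructor
    · rintro ⟨h1, h2⟩
      funext i
      have hi : i = 0 := Subsingleton.elim _ _
      rw [hi]
      exact Fin.ext h2
    · rintro rfl
      exact ⟨fun i => hc, rfl⟩
  have hzero : sufSum (fun _ : Fin 1 => (⟨c, Nat.lt_succ_self c⟩ : Fin (c + 1))) 0 = 0 := by
    rw [sufSum]
    apply Finset.sum_eq_zero
    intro x hx
    have : x = 0 := Subsingleton.elim _ _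
    rw [this] at hx
    exact absurd (Finset.mem_Ioi.mp hx) (lt_irrefl _)
  rw [CF, hs, Finset.sum_singleton, Fin.prod_univ_one, hzero, zero_mul, add_zero]

/-- The family defined by the "head" recursion; `Pfun y n j k = (-1)^k x^k_j`. -/
def Pfun (y : ℕ → ℤ → R) (n j : ℤ) : ℕ → R
  | 0 => 1
  | (m + 1) =>
    -∑ a ∈ (Finset.Icc 1 (m + 1)).attach,
      y a.1 (j + ((m + 1 - a.1 : ℕ) : ℤ) * n) * Pfun y n j (m + 1 - a.1)
  decreasing_by
    have := Finset.mem_Icc.mp a.2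
    omega

lemma Pfun_zero (y : ℕ → ℤ → R) (n j : ℤ) : Pfun y n j 0 = 1 := by rw [Pfun]

lemma Pfun_rec (y : ℕ → ℤ → R) (n j : ℤ) {c : ℕ} (hc : 1 ≤ c) :
    Pfun y n j c
      = -∑ h ∈ Finset.Icc 1 c, y h (j + ((c - h : ℕ) : ℤ) * n) * Pfun y n j (c - h) := by
  obtain ⟨m, rfl⟩ : ∃ m, c = m + 1 := ⟨c - 1, by omega⟩
  rw [Pfun]
  congr 1
  exact Finset.sum_attach _ (fun h => y h (j + ((m + 1 - h : ℕ) : ℤ) * n) * Pfun y n j (m + 1 - h))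

lemma sum_Icc_one_succ (f : ℕ → R) (m : ℕ) :
    ∑ p ∈ Finset.Icc 1 (m + 1), f p = f 1 + ∑ q ∈ Finset.Icc 1 m, f (q + 1) := by
  induction m with
  | zero => simp
  | succ m ih =>
    rw [Finset.sum_Icc_succ_top (by omega) f, ih,
      Finset.sum_Icc_succ_top (by omega) (fun q => f (q + 1)), add_assoc]

lemma CF_split (y : ℕ → ℤ → R) (n j : ℤ) (c q : ℕ) :
    CF y n j c (q + 1)
      = ∑ h ∈ Finset.Icc 1 c, y h (j + ((c - h : ℕ) : ℤ) * n) * CF y n j (c - h) q := by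
  simp only [CF, Finset.mul_sum]
  rw [Finset.sum_sigma']
  refine Finset.sum_nbij' (compFwd c q) (compBwd c q) ?_ ?_ ?_ ?_ ?_
  · -- maps into sigma
    intro K hK
    have hm := mem_comps_iff.mp hK
    have hsum := hm.2
    rw [Fin.sum_univ_succ] at hsum
    have hle : ∀ a : Fin q, (K a.succ : ℕ) ≤ c - (K 0 : ℕ) := by
      intro a
      have h5 : (K a.succ : ℕ) ≤ ∑ b : Fin q, (K b.succ : ℕ) :=
        Finset.single_le_sum (f := fun b : Fin q => (K b.succ : ℕ))
          (fun i _ => Nat.zero_le _) (Finset.mem_univ a)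
      omega
    refine Finset.mem_sigma.mpr ⟨Finset.mem_Icc.mpr ⟨hm.1 0, ?_⟩,
      mem_comps_iff.mpr ⟨?_, ?_⟩⟩
    · show (K 0 : ℕ) ≤ c
      omega
    · intro a
      show 1 ≤ min (K a.succ : ℕ) (c - (K 0 : ℕ))
      have h1 := hm.1 a.succ
      have h2 := hle a
      omega
    · show (∑ b : Fin q, min (K b.succ : ℕ) (c - (K 0 : ℕ))) = c - (K 0 : ℕ)
      have : ∀ b : Fin q, min (K b.succ : ℕ) (c - (K 0 : ℕ)) = (K b.succ : ℕ) :=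
        fun b => min_eq_left (hle b)
      rw [Finset.sum_congr rfl fun b _ => this b]
      omega
  · -- maps back into comps
    intro x hx
    obtain ⟨hx1, hx2⟩ := Finset.mem_sigma.mp hx
    have h1 := Finset.mem_Icc.mp hx1
    have hm := mem_comps_iff.mp hx2
    have hle : ∀ a, (x.2 a : ℕ) ≤ c - x.1 := fun a => Nat.lt_succ_iff.mp (x.2 a).2
    refine mem_comps_iff.mpr ⟨?_, ?_⟩
    · intro i
      refine Fin.cases ?_ ?_ i
      · show 1 ≤ min x.1 c
        omega
      · intro a
        show 1 ≤ min (x.2 a : ℕ) c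
        have := hm.1 a
        have := hle a
        omega
    · rw [Fin.sum_univ_succ]
      show min x.1 c + (∑ b : Fin q, min (x.2 b : ℕ) c) = c
      have : ∀ b : Fin q, min (x.2 b : ℕ) c = (x.2 b : ℕ) := by
        intro b
        have := hle b
        omega
      rw [Finset.sum_congr rfl fun b _ => this b, hm.2]
      omega
  · -- left inverse
    intro K hK
    have hm := mem_comps_iff.mp hK
    have hsum := hm.2
    rw [Fin.sum_univ_succ] at hsum
    have hle : ∀ a : Fin q, (K a.succ : ℕ) ≤ c - (K 0 : ℕ) := by
      intro a
      have h5 : (K a.succ : ℕ) ≤ ∑ b : Fin q, (K b.succ : ℕ) :=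
        Finset.single_le_sum (f := fun b : Fin q => (K b.succ : ℕ))
          (fun i _ => Nat.zero_le _) (Finset.mem_univ a)
      omega
    funext i
    refine Fin.cases ?_ ?_ i
    · simp only [compBwd, Fin.cons_zero]
      refine Fin.ext ?_
      show min (compFwd c q K).1 c = (K 0 : ℕ)
      have hfst : (compFwd c q K).1 = (K 0 : ℕ) := rfl
      rw [hfst]
      omega
    · intro a
      simp only [compBwd, Fin.cons_succ]
      refine Fin.ext ?_
      show min ((compFwd c q K).2 a : ℕ) c = (K a.succ : ℕ)
      have h2 : ((compFwd c q K).2 a : ℕ) = min (K a.succ : ℕ) (c - (K 0 : ℕ)) := rfl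
      rw [h2]
      have := hle a
      omega
  · -- right inverse
    intro x hx
    obtain ⟨h, K'⟩ := x
    obtain ⟨hx1, hx2⟩ := Finset.mem_sigma.mp hx
    have h1 : 1 ≤ h ∧ h ≤ c := Finset.mem_Icc.mp hx1
    have hle : ∀ a, (K' a : ℕ) ≤ c - h := fun a => Nat.lt_succ_iff.mp (K' a).2
    have hcons0 : ((compBwd c q ⟨h, K'⟩) 0 : ℕ) = h := by
      show ((Fin.cons _ _ : Fin (q+1) → Fin (c+1)) 0 : ℕ) = h
      rw [Fin.cons_zero]
      show min h c = h
      have := h1.2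
      omega
    refine sigma_mk_eq hcons0 _ _ ?_
    intro a
    show min ((compBwd c q ⟨h, K'⟩) a.succ : ℕ) (c - ((compBwd c q ⟨h, K'⟩) 0 : ℕ))
        = (K' a : ℕ)
    rw [hcons0]
    have h3 : ((compBwd c q ⟨h, K'⟩) a.succ : ℕ) = min (K' a : ℕ) c := by
      show ((Fin.cons _ _ : Fin (q+1) → Fin (c+1)) a.succ : ℕ) = min (K' a : ℕ) c
      rw [Fin.cons_succ]
    rw [h3]
    have := hle a
    omega
  · -- summand equality
    intro K hK
    have hm := mem_comps_iff.mp hK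
    have hsum := hm.2
    rw [Fin.sum_univ_succ] at hsum
    have hle : ∀ a : Fin q, (K a.succ : ℕ) ≤ c - (K 0 : ℕ) := by
      intro a
      have h5 : (K a.succ : ℕ) ≤ ∑ b : Fin q, (K b.succ : ℕ) :=
        Finset.single_le_sum (f := fun b : Fin q => (K b.succ : ℕ))
          (fun i _ => Nat.zero_le _) (Finset.mem_univ a)
      omega
    rw [Fin.prod_univ_succ]
    have h0 : sufSum K 0 = ((c - (K 0 : ℕ) : ℕ) : ℤ) := by
      rw [sufSum, Fin.sum_Ioi_zero]
      have h1 : (∑ b : Fin q, ((K b.succ : ℕ) : ℤ)) = ((∑ b : Fin q, (K b.succ : ℕ) : ℕ) : ℤ) := by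
        push_cast; rfl
      rw [h1]
      omega
    rw [h0]
    congr 1
    apply Finset.prod_congr rfl
    intro a _
    have hval : (((compFwd c q K).2 a : ℕ)) = (K a.succ : ℕ) := by
      show min (K a.succ : ℕ) (c - (K 0 : ℕ)) = (K a.succ : ℕ)
      exact min_eq_left (hle a)
    have h2 : sufSum (compFwd c q K).2 a = sufSum K a.succ := by
      simp only [sufSum]
      rw [Fin.sum_Ioi_succ]
      apply Finset.sum_congr rfl
      intro b _
      show ((min (K b.succ : ℕ) (c - (K 0 : ℕ)) : ℕ) : ℤ) = ((K b.succ : ℕ) : ℤ)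
      have := hle b
      omega
    rw [h2, hval]

lemma G_eq_P (y : ℕ → ℤ → R) (n j : ℤ) :
    ∀ c, 1 ≤ c → (∑ p ∈ Finset.Icc 1 c, (-1 : R) ^ p * CF y n j c p) = Pfun y n j c := by
  intro c
  induction c using Nat.strong_induction_on with
  | _ c IH =>
    intro hc
    obtain ⟨m, rfl⟩ : ∃ m, c = m + 1 := ⟨c - 1, by omega⟩
    rw [sum_Icc_one_succ (fun p => (-1 : R) ^ p * CF y n j (m + 1) p) m]
    have hstep : ∀ q ∈ Finset.Icc 1 m,
        (-1 : R) ^ (q + 1) * CF y n j (m + 1) (q + 1)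
          = ∑ h ∈ Finset.Icc 1 (m + 1),
              (-1 : R) ^ (q + 1)
                * (y h (j + ((m + 1 - h : ℕ) : ℤ) * n) * CF y n j (m + 1 - h) q) := by
      intro q hq
      rw [CF_split, Finset.mul_sum]
    rw [Finset.sum_congr rfl hstep, Finset.sum_comm,
      Finset.sum_Icc_succ_top (show 1 ≤ m + 1 by omega)]
    have hlast : (∑ q ∈ Finset.Icc 1 m,
        (-1 : R) ^ (q + 1)
          * (y (m + 1) (j + ((m + 1 - (m + 1) : ℕ) : ℤ) * n) * CF y n j (m + 1 - (m + 1)) q)) = 0 := by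
      apply Finset.sum_eq_zero
      intro q hq
      have h1 := Finset.mem_Icc.mp hq
      rw [show m + 1 - (m + 1) = 0 by omega, CF_empty y n j (by omega), mul_zero, mul_zero]
    rw [hlast, add_zero]
    have hmain : ∀ h ∈ Finset.Icc 1 m,
        (∑ q ∈ Finset.Icc 1 m,
          (-1 : R) ^ (q + 1)
            * (y h (j + ((m + 1 - h : ℕ) : ℤ) * n) * CF y n j (m + 1 - h) q))
        = -(y h (j + ((m + 1 - h : ℕ) : ℤ) * n) * Pfun y n j (m + 1 - h)) := by
      intro h hh
      have h1 := Finset.mem_Icc.mp hh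
      have hq : (∑ q ∈ Finset.Icc 1 m, (-1 : R) ^ q * CF y n j (m + 1 - h) q)
          = Pfun y n j (m + 1 - h) := by
        have hsub : Finset.Icc 1 (m + 1 - h) ⊆ Finset.Icc 1 m := by
          intro q hq
          have := Finset.mem_Icc.mp hq
          exact Finset.mem_Icc.mpr (by omega)
        rw [← Finset.sum_subset hsub (fun q hq1 hq2 => ?_)]
        · exact IH (m + 1 - h) (by omega) (by omega)
        · have hq1' := Finset.mem_Icc.mp hq1
          have : m + 1 - h < q := by
            by_contra hcon
            exact hq2 (Finset.mem_Icc.mpr (by omega))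
          rw [CF_empty y n j this, mul_zero]
      calc (∑ q ∈ Finset.Icc 1 m,
          (-1 : R) ^ (q + 1)
            * (y h (j + ((m + 1 - h : ℕ) : ℤ) * n) * CF y n j (m + 1 - h) q))
          = ∑ q ∈ Finset.Icc 1 m,
            -(y h (j + ((m + 1 - h : ℕ) : ℤ) * n) * ((-1 : R) ^ q * CF y n j (m + 1 - h) q)) := by
            apply Finset.sum_congr rfl
            intro q _
            ring
        _ = -(y h (j + ((m + 1 - h : ℕ) : ℤ) * n)
              * ∑ q ∈ Finset.Icc 1 m, (-1 : R) ^ q * CF y n j (m + 1 - h) q) := by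
            rw [Finset.mul_sum, ← Finset.sum_neg_distrib]
        _ = -(y h (j + ((m + 1 - h : ℕ) : ℤ) * n) * Pfun y n j (m + 1 - h)) := by rw [hq]
    rw [Finset.sum_congr rfl hmain]
    rw [Pfun_rec y n j (show 1 ≤ m + 1 by omega),
      Finset.sum_Icc_succ_top (show 1 ≤ m + 1 by omega)]
    rw [CF_one y n j (show 1 ≤ m + 1 by omega)]
    rw [show m + 1 - (m + 1) = 0 by omega, Pfun_zero, Nat.cast_zero, zero_mul, add_zero, mul_one]
    rw [Finset.sum_neg_distrib]
    ring

lemma P_tail (y : ℕ → ℤ → R) (n : ℤ) :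
    ∀ c, 1 ≤ c → ∀ j : ℤ, Pfun y n j c
      = -∑ a ∈ Finset.Icc 1 c, Pfun y n (j + (a : ℤ) * n) (c - a) * y a j := by
  intro c
  induction c using Nat.strong_induction_on with
  | _ c IH =>
    intro hc j
    obtain ⟨m, rfl⟩ : ∃ m, c = m + 1 := ⟨c - 1, by omega⟩
    rw [Pfun_rec y n j (show 1 ≤ m + 1 by omega),
      Finset.sum_Icc_succ_top (show 1 ≤ m + 1 by omega),
      Finset.sum_Icc_succ_top (show 1 ≤ m + 1 by omega)
        (fun a => Pfun y n (j + (a : ℤ) * n) (m + 1 - a) * y a j)]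
    rw [show m + 1 - (m + 1) = 0 by omega, Pfun_zero, Nat.cast_zero, zero_mul, add_zero,
      Pfun_zero, mul_one, one_mul]
    have hmain : (∑ h ∈ Finset.Icc 1 m, y h (j + ((m + 1 - h : ℕ) : ℤ) * n) * Pfun y n j (m + 1 - h))
        = ∑ a ∈ Finset.Icc 1 m, Pfun y n (j + (a : ℤ) * n) (m + 1 - a) * y a j := by
      have step1 : ∀ h ∈ Finset.Icc 1 m,
          y h (j + ((m + 1 - h : ℕ) : ℤ) * n) * Pfun y n j (m + 1 - h)
            = ∑ a ∈ Finset.Icc 1 (m + 1 - h),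
                -(y h (j + ((m + 1 - h : ℕ) : ℤ) * n)
                  * (Pfun y n (j + (a : ℤ) * n) (m + 1 - h - a) * y a j)) := by
        intro h hh
        have h1 := Finset.mem_Icc.mp hh
        rw [IH (m + 1 - h) (by omega) (by omega) j, mul_neg, Finset.mul_sum,
          ← Finset.sum_neg_distrib]
      have hcond : ∀ (h a : ℕ), h ∈ Finset.Icc 1 m ∧ a ∈ Finset.Icc 1 (m + 1 - h)
          ↔ h ∈ Finset.Icc 1 (m + 1 - a) ∧ a ∈ Finset.Icc 1 m := by
        intro h a
        constructor
        · rintro ⟨h1, h2⟩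
          have h1' := Finset.mem_Icc.mp h1
          have h2' := Finset.mem_Icc.mp h2
          exact ⟨Finset.mem_Icc.mpr (by omega), Finset.mem_Icc.mpr (by omega)⟩
        · rintro ⟨h1, h2⟩
          have h1' := Finset.mem_Icc.mp h1
          have h2' := Finset.mem_Icc.mp h2
          exact ⟨Finset.mem_Icc.mpr (by omega), Finset.mem_Icc.mpr (by omega)⟩
      rw [Finset.sum_congr rfl step1,
        Finset.sum_comm' (t' := Finset.Icc 1 m) (s' := fun a => Finset.Icc 1 (m + 1 - a)) hcond]
      apply Finset.sum_congr rfl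
      intro a ha
      have h1 := Finset.mem_Icc.mp ha
      have hstep : ∀ h ∈ Finset.Icc 1 (m + 1 - a),
          -(y h (j + ((m + 1 - h : ℕ) : ℤ) * n)
            * (Pfun y n (j + (a : ℤ) * n) (m + 1 - h - a) * y a j))
          = -(y h ((j + (a : ℤ) * n) + ((m + 1 - a - h : ℕ) : ℤ) * n)
              * Pfun y n (j + (a : ℤ) * n) (m + 1 - a - h)) * y a j := by
        intro h hh
        have h2 := Finset.mem_Icc.mp hh
        have hc1 : ((m + 1 - h : ℕ) : ℤ) = (a : ℤ) + ((m + 1 - a - h : ℕ) : ℤ) := by omega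
        have hc2 : m + 1 - h - a = m + 1 - a - h := by omega
        rw [hc2, hc1]
        ring
      rw [Finset.sum_congr rfl hstep, ← Finset.sum_mul, Finset.sum_neg_distrib,
        ← Pfun_rec y n (j + (a : ℤ) * n) (show 1 ≤ m + 1 - a by omega)]
    rw [hmain]

lemma Xvar_eq_P (y : ℕ → ℤ → R) (n : ℤ) {k : ℕ} (hk : 1 ≤ k) (j : ℤ) :
    Xvar y n k j = (-1 : R) ^ k * Pfun y n j k := by
  show (-1 : R) ^ k * (∑ p ∈ Finset.Icc 1 k, (-1 : R) ^ p * CF y n j k p)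
      = (-1 : R) ^ k * Pfun y n j k
  rw [G_eq_P y n j k hk]

lemma Pfun_Xvar (y : ℕ → ℤ → R) (n : ℤ) :
    ∀ k, 1 ≤ k → ∀ j : ℤ,
      Pfun (fun r m => Xvar y n r m) n j k = (-1 : R) ^ k * y k j := by
  intro k
  induction k using Nat.strong_induction_on with
  | _ k IH =>
    intro hk j
    obtain ⟨m, rfl⟩ : ∃ m, k = m + 1 := ⟨k - 1, by omega⟩
    rw [Pfun_rec _ n j (show 1 ≤ m + 1 by omega),
      Finset.sum_Icc_succ_top (show 1 ≤ m + 1 by omega)]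
    rw [show m + 1 - (m + 1) = 0 by omega, Pfun_zero, Nat.cast_zero, zero_mul, add_zero, mul_one]
    have hterm : ∀ h ∈ Finset.Icc 1 m,
        Xvar y n h (j + ((m + 1 - h : ℕ) : ℤ) * n)
            * Pfun (fun r m' => Xvar y n r m') n j (m + 1 - h)
          = (-1 : R) ^ (m + 1)
            * (Pfun y n (j + ((m + 1 - h : ℕ) : ℤ) * n) h * y (m + 1 - h) j) := by
      intro h hh
      have h1 := Finset.mem_Icc.mp hh
      rw [IH (m + 1 - h) (by omega) (by omega) j, Xvar_eq_P y n (by omega : 1 ≤ h)]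
      have hpow : (-1 : R) ^ h * (-1 : R) ^ (m + 1 - h) = (-1 : R) ^ (m + 1) := by
        rw [← pow_add, show h + (m + 1 - h) = m + 1 by omega]
      calc (-1 : R) ^ h * Pfun y n (j + ((m + 1 - h : ℕ) : ℤ) * n) h
            * ((-1 : R) ^ (m + 1 - h) * y (m + 1 - h) j)
          = ((-1 : R) ^ h * (-1 : R) ^ (m + 1 - h))
            * (Pfun y n (j + ((m + 1 - h : ℕ) : ℤ) * n) h * y (m + 1 - h) j) := by ring
        _ = _ := by rw [hpow]
    rw [Finset.sum_congr rfl hterm, ← Finset.mul_sum]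
    have hre : (∑ h ∈ Finset.Icc 1 m,
          Pfun y n (j + ((m + 1 - h : ℕ) : ℤ) * n) h * y (m + 1 - h) j)
        = ∑ a ∈ Finset.Icc 1 m, Pfun y n (j + (a : ℤ) * n) (m + 1 - a) * y a j := by
      refine Finset.sum_nbij' (fun h => m + 1 - h) (fun a => m + 1 - a) ?_ ?_ ?_ ?_ ?_
      · intro h hh
        have := Finset.mem_Icc.mp hh
        show m + 1 - h ∈ Finset.Icc 1 m
        exact Finset.mem_Icc.mpr (by omega)
      · intro a ha
        have := Finset.mem_Icc.mp ha
        show m + 1 - a ∈ Finset.Icc 1 m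
        exact Finset.mem_Icc.mpr (by omega)
      · intro h hh
        have := Finset.mem_Icc.mp hh
        show m + 1 - (m + 1 - h) = h
        omega
      · intro a ha
        have := Finset.mem_Icc.mp ha
        show m + 1 - (m + 1 - a) = a
        omega
      · intro h hh
        have := Finset.mem_Icc.mp hh
        rw [show m + 1 - (m + 1 - h) = h by omega]
    rw [hre]
    have htail := P_tail y n (m + 1) (by omega) j
    rw [Finset.sum_Icc_succ_top (show 1 ≤ m + 1 by omega),
      show m + 1 - (m + 1) = 0 by omega, Pfun_zero, one_mul] at htail
    have hsum : (∑ a ∈ Finset.Icc 1 m, Pfun y n (j + (a : ℤ) * n) (m + 1 - a) * y a j)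
        = -Pfun y n j (m + 1) - y (m + 1) j := by
      rw [htail]
      ring
    rw [hsum, Xvar_eq_P y n (show 1 ≤ m + 1 by omega) j]
    ring

end Aux

/-- the transformation `y ↦ x` is an involution: applying the same
formula to the family `x` recovers `y`. -/
theorem Xvar_involutive {R : Type*} [CommRing R] (y : ℕ → ℤ → R) (n : ℤ)
    (hn : 1 ≤ n) (k : ℕ) (hk : 1 ≤ k) (j : ℤ) :
    Xvar (fun r m => Xvar y n r m) n k j = y k j := by
  have h1 : Xvar (fun r m => Xvar y n r m) n k j
      = (-1 : R) ^ k * Pfun (fun r m => Xvar y n r m) n j k :=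
    Xvar_eq_P _ n hk j
  rw [h1, Pfun_Xvar y n k hk j]
  have h2 : (-1 : R) ^ k * (-1 : R) ^ k = 1 := by
    rw [← pow_add, show k + k = 2 * k by ring, pow_mul]
    norm_num
  rw [← mul_assoc, h2, one_mul]
end

section
/- The polynomials S^k_s satisfy the recurrence in terms of the variables x^r_j: S^k_s = S^k_{s-1} + Σ_{j=1}^{k-1} x^j_{(s-1)h} · S^{k-j, jn}_{s-1} + x^k_{(s-1)h} for all k ≥ 1 and s ≥ 2, where S^k_s = Σ_K Σ_{0 ≤ λ_1 < ... < λ_p ≤ s-1} x^{k_1}_{λ_1 h + (k_2+...+k_p)n} ⋯ x^{k_{p-1}}_{λ_{p-1} h + k_p n} x^{k_p}_{λ_p h} (sum over compositions K of k, strictly increasing λ's). -/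
open Finset

/-- `S^k_s` expressed in the `x`-variables:
`S^k_s = Σ_K Σ_{0 ≤ λ_1 < ⋯ < λ_p ≤ s-1} x^{k_1}_{λ_1 h + (k_2+⋯+k_p)n} ⋯ x^{k_p}_{λ_p h}`
(strictly increasing `λ`'s). -/
def SpolyX {R : Type*} [CommRing R] (x : ℕ → ℤ → R) (n h : ℤ) (k s : ℕ) : R :=
  ∑ p ∈ Finset.Icc 1 k, ∑ K ∈ comps k p,
    ∑ lam ∈ Finset.univ.filter (fun lam : Fin p → Fin s => ∀ i j, i < j → lam i < lam j),
      ∏ i, x ((K i : ℕ)) (((lam i : ℕ) : ℤ) * h + sufSum K i * n)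


/-- ℕ-valued compositions of `m` into `p` positive parts. -/
def cN (m p : ℕ) : Finset (Fin p → ℕ) :=
  (Fintype.piFinset fun _ => Finset.range (m + 1)).filter
    fun K => (∀ i, 1 ≤ K i) ∧ ∑ i, K i = m

/-- ℕ-valued strictly increasing sequences with values `< s`. -/
def lamN (s p : ℕ) : Finset (Fin p → ℕ) :=
  (Fintype.piFinset fun _ => Finset.range s).filter
    fun l => ∀ i j : Fin p, i < j → l i < l j

def sufN {p : ℕ} (K : Fin p → ℕ) (i : Fin p) : ℤ := ∑ j ∈ Finset.Ioi i, (K j : ℤ)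

lemma mem_cN {m p : ℕ} {K : Fin p → ℕ} :
    K ∈ cN m p ↔ (∀ i, 1 ≤ K i) ∧ ∑ i, K i = m := by
  simp only [cN, mem_filter, Fintype.mem_piFinset, mem_range]
  constructor
  · rintro ⟨-, h⟩; exact h
  · rintro ⟨h1, h2⟩
    refine ⟨fun i => ?_, h1, h2⟩
    have := Finset.single_le_sum (f := K) (fun j _ => Nat.zero_le _) (mem_univ i)
    omega

lemma mem_lamN {s p : ℕ} {l : Fin p → ℕ} :
    l ∈ lamN s p ↔ (∀ i, l i < s) ∧ ∀ i j : Fin p, i < j → l i < l j := by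
  simp [lamN, mem_filter, Fintype.mem_piFinset, mem_range]

lemma cN_eq_empty {m p : ℕ} (h : m < p ∨ (p = 0 ∧ m ≠ 0)) : cN m p = ∅ := by
  rw [Finset.eq_empty_iff_forall_notMem]
  intro K hK
  rw [mem_cN] at hK
  obtain ⟨h1, h2⟩ := hK
  have hp : (p : ℕ) ≤ ∑ i, K i := by
    calc (p : ℕ) = ∑ _i : Fin p, 1 := by simp
    _ ≤ ∑ i, K i := Finset.sum_le_sum fun i _ => h1 i
  rcases h with h | ⟨rfl, hm⟩
  · omega
  · simp at h2; omega


lemma sum_comps {M : Type*} [AddCommMonoid M] (m p : ℕ) (f : (Fin p → ℕ) → M) :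
    ∑ K ∈ comps m p, f (fun i => (K i : ℕ)) = ∑ K ∈ cN m p, f K := by
  refine Finset.sum_nbij' (fun K => fun i => (K i : ℕ))
    (fun K => fun i => (⟨K i % (m + 1), Nat.mod_lt _ (Nat.succ_pos m)⟩ : Fin (m + 1)))
    ?_ ?_ ?_ ?_ ?_
  · intro K hK
    simp only [comps, mem_filter, mem_univ, true_and] at hK
    exact mem_cN.2 hK
  · intro K hK
    rw [mem_cN] at hK
    obtain ⟨h1, h2⟩ := hK
    have hle : ∀ i, K i ≤ m := fun i => by
      have := Finset.single_le_sum (f := K) (fun j _ => Nat.zero_le _) (mem_univ i)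
      omega
    simp only [comps, mem_filter, mem_univ, true_and]
    constructor
    · intro i
      simp only [Nat.mod_eq_of_lt (by have := hle i; omega : K i < m + 1)]
      exact h1 i
    · refine Eq.trans ?_ h2
      apply Finset.sum_congr rfl
      intro i _
      simp [Nat.mod_eq_of_lt (by have := hle i; omega : K i < m + 1)]
  · intro K hK
    funext i
    apply Fin.ext
    simp [Nat.mod_eq_of_lt (K i).isLt]
  · intro K hK
    rw [mem_cN] at hK
    have hle : ∀ i, K i ≤ m := fun i => by
      have := Finset.single_le_sum (f := K) (fun j _ => Nat.zero_le _) (mem_univ i)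
      omega
    funext i
    simp [Nat.mod_eq_of_lt (by have := hle i; omega : K i < m + 1)]
  · intro K _; rfl

lemma sum_lams {M : Type*} [AddCommMonoid M] (s p : ℕ) (hs : 0 < s)
    (f : (Fin p → ℕ) → M) :
    ∑ l ∈ Finset.univ.filter (fun l : Fin p → Fin s => ∀ i j, i < j → l i < l j),
      f (fun i => (l i : ℕ)) = ∑ l ∈ lamN s p, f l := by
  refine Finset.sum_nbij' (fun l => fun i => (l i : ℕ))
    (fun l => fun i => (⟨l i % s, Nat.mod_lt _ hs⟩ : Fin s)) ?_ ?_ ?_ ?_ ?_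
  · intro l hl
    simp only [mem_filter, mem_univ, true_and] at hl
    exact mem_lamN.2 ⟨fun i => (l i).isLt, fun i j hij => hl i j hij⟩
  · intro l hl
    rw [mem_lamN] at hl
    simp only [mem_filter, mem_univ, true_and]
    intro i j hij
    simp only [Fin.lt_def, Nat.mod_eq_of_lt (hl.1 _)]
    exact hl.2 i j hij
  · intro l hl
    funext i
    apply Fin.ext
    simp [Nat.mod_eq_of_lt (l i).isLt]
  · intro l hl
    rw [mem_lamN] at hl
    funext i
    simp [Nat.mod_eq_of_lt (hl.1 i)]
  · intro l _; rfl

lemma sufN_last {p : ℕ} (K : Fin (p + 1) → ℕ) : sufN K (Fin.last p) = 0 := by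
  have : Finset.Ioi (Fin.last p) = ∅ := by
    rw [Finset.eq_empty_iff_forall_notMem]
    intro j hj
    rw [Finset.mem_Ioi] at hj
    exact absurd (Fin.le_last j) (not_le.2 hj)
  simp [sufN, this]

lemma Ioi_sum_eq_filter {p : ℕ} (i : Fin p) (f : Fin p → ℤ) :
    ∑ j ∈ Finset.Ioi i, f j = ∑ j : Fin p, if i < j then f j else 0 := by
  rw [← Finset.sum_filter]
  congr 1
  ext j
  simp [Finset.mem_Ioi]

lemma sufN_snoc_castSucc {p : ℕ} (K : Fin p → ℕ) (j : ℕ) (i : Fin p) :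
    sufN (Fin.snoc K j) (Fin.castSucc i) = sufN K i + (j : ℤ) := by
  rw [sufN, sufN, Ioi_sum_eq_filter, Ioi_sum_eq_filter, Fin.sum_univ_castSucc]
  simp only [Fin.snoc_castSucc, Fin.snoc_last, Fin.castSucc_lt_castSucc_iff,
    Fin.castSucc_lt_last, if_true]

lemma sum_cN_succ {M : Type*} [AddCommMonoid M] (k p : ℕ) (f : (Fin (p + 1) → ℕ) → M) :
    ∑ K ∈ cN k (p + 1), f K = ∑ j ∈ Finset.Icc 1 k, ∑ K' ∈ cN (k - j) p, f (Fin.snoc K' j) := by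
  have hmaps : ∀ K ∈ cN k (p + 1), K (Fin.last p) ∈ Finset.Icc 1 k := by
    intro K hK
    rw [mem_cN] at hK
    rw [Finset.mem_Icc]
    have hK2 := hK.2
    have : K (Fin.last p) ≤ ∑ i, K i :=
      Finset.single_le_sum (fun j _ => Nat.zero_le _) (mem_univ _)
    exact ⟨hK.1 _, by omega⟩
  rw [← Finset.sum_fiberwise_of_maps_to (g := fun K => K (Fin.last p)) hmaps f]
  refine Finset.sum_congr rfl fun j hj => ?_
  rw [Finset.mem_Icc] at hj
  refine Finset.sum_nbij' Fin.init (fun K' => Fin.snoc K' j) ?_ ?_ ?_ ?_ ?_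
  · intro K hK
    rw [Finset.mem_filter, mem_cN] at hK
    obtain ⟨⟨h1, h2⟩, h3⟩ := hK
    rw [mem_cN]
    refine ⟨fun i => h1 _, ?_⟩
    rw [Fin.sum_univ_castSucc] at h2
    have : ∑ i : Fin p, Fin.init K i = ∑ i : Fin p, K (Fin.castSucc i) := rfl
    omega
  · intro K' hK'
    rw [mem_cN] at hK'
    obtain ⟨h1, h2⟩ := hK'
    rw [Finset.mem_filter, mem_cN]
    refine ⟨⟨fun i => ?_, ?_⟩, by simp⟩
    · induction i using Fin.lastCases with
      | last => simpa using hj.1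
      | cast i => simpa using h1 i
    · rw [Fin.sum_univ_castSucc]
      simp only [Fin.snoc_castSucc, Fin.snoc_last]
      omega
  · intro K hK
    rw [Finset.mem_filter] at hK
    rw [← hK.2]
    exact Fin.snoc_init_self K
  · intro K' _
    exact funext fun i => by simp [Fin.init_snoc]
  · intro K hK
    rw [Finset.mem_filter] at hK
    rw [← hK.2]
    rw [Fin.snoc_init_self K]

lemma sum_lamN_top {M : Type*} [AddCommMonoid M] (s p : ℕ) (hs : 2 ≤ s)
    (g : (Fin (p + 1) → ℕ) → M) :
    ∑ l ∈ (lamN s (p + 1)).filter (fun l => ¬ ∀ i, l i < s - 1), g l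
    = ∑ l' ∈ lamN (s - 1) p, g (Fin.snoc l' (s - 1)) := by
  have hlast : ∀ l ∈ (lamN s (p + 1)).filter (fun l => ¬ ∀ i, l i < s - 1),
      l (Fin.last p) = s - 1 := by
    intro l hl
    rw [Finset.mem_filter, mem_lamN] at hl
    obtain ⟨⟨hlt, hinc⟩, hex⟩ := hl
    push_neg at hex
    obtain ⟨i, hi⟩ := hex
    have h1 : l i ≤ l (Fin.last p) := by
      rcases eq_or_lt_of_le (Fin.le_last i) with h | h
      · rw [h]
      · exact le_of_lt (hinc _ _ h)
    have := hlt (Fin.last p)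
    omega
  refine Finset.sum_nbij' Fin.init (fun l' => Fin.snoc l' (s - 1)) ?_ ?_ ?_ ?_ ?_
  · intro l hl
    have hl' := hl
    rw [Finset.mem_filter, mem_lamN] at hl'
    obtain ⟨⟨hlt, hinc⟩, -⟩ := hl'
    rw [mem_lamN]
    constructor
    · intro i
      have : l (Fin.castSucc i) < l (Fin.last p) := hinc _ _ (Fin.castSucc_lt_last i)
      rw [hlast l hl] at this
      exact this
    · intro i j hij
      exact hinc _ _ (by simpa using hij)
  · intro l' hl'
    rw [mem_lamN] at hl'
    obtain ⟨hlt, hinc⟩ := hl'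
    rw [Finset.mem_filter, mem_lamN]
    refine ⟨⟨fun i => ?_, fun i j hij => ?_⟩, ?_⟩
    · induction i using Fin.lastCases with
      | last => simpa using by omega
      | cast i => simp only [Fin.snoc_castSucc]; have := hlt i; omega
    · induction j using Fin.lastCases with
      | last =>
        have : i < Fin.last p := hij
        obtain ⟨i', rfl⟩ := Fin.exists_castSucc_eq.2 (Fin.ne_last_of_lt this)
        simp only [Fin.snoc_castSucc, Fin.snoc_last]
        exact hlt i'
      | cast j =>
        have : i < Fin.castSucc j := hij
        obtain ⟨i', rfl⟩ := Fin.exists_castSucc_eq.2 (Fin.ne_last_of_lt this)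
        simp only [Fin.snoc_castSucc]
        exact hinc _ _ (by simpa using this)
    · push_neg
      exact ⟨Fin.last p, by simp⟩
  · intro l hl
    rw [← hlast l hl]
    exact Fin.snoc_init_self l
  · intro l' _
    exact funext fun i => by simp [Fin.init_snoc]
  · intro l hl
    rw [← hlast l hl, Fin.snoc_init_self l]

lemma lamN_filter_lt (s p : ℕ) :
    (lamN s p).filter (fun l => ∀ i, l i < s - 1) = lamN (s - 1) p := by
  ext l
  simp only [Finset.mem_filter, mem_lamN]
  constructor
  · rintro ⟨⟨-, hinc⟩, hlt⟩
    exact ⟨hlt, hinc⟩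
  · rintro ⟨hlt, hinc⟩
    exact ⟨⟨fun i => by have := hlt i; omega, hinc⟩, hlt⟩


def termF {R : Type*} [CommRing R] (x : ℕ → ℤ → R) (n h : ℤ) {p : ℕ} (K l : Fin p → ℕ) : R :=
  ∏ i, x (K i) ((l i : ℤ) * h + sufN K i * n)

lemma SpolyX_eq {R : Type*} [CommRing R] (x : ℕ → ℤ → R) (n h : ℤ) (k s : ℕ) (hs : 0 < s) :
    SpolyX x n h k s
      = ∑ p ∈ Finset.Icc 1 k, ∑ K ∈ cN k p, ∑ l ∈ lamN s p, termF x n h K l := by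
  unfold SpolyX
  refine Finset.sum_congr rfl fun p _ => ?_
  rw [← sum_comps k p (fun K => ∑ l ∈ lamN s p, termF x n h K l)]
  refine Finset.sum_congr rfl fun K _ => ?_
  exact sum_lams s p hs (fun l => termF x n h (fun i => (K i : ℕ)) l)

lemma termF_snoc {R : Type*} [CommRing R] (x : ℕ → ℤ → R) (n h : ℤ) (s : ℕ) (hs : 2 ≤ s)
    {p : ℕ} (j : ℕ) (K' l' : Fin p → ℕ) :
    termF x n h (Fin.snoc K' j) (Fin.snoc l' (s - 1))
      = x j (((s : ℤ) - 1) * h) * termF (shiftVar x ((j : ℤ) * n)) n h K' l' := by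
  unfold termF shiftVar
  rw [Fin.prod_univ_castSucc]
  simp only [Fin.snoc_castSucc, Fin.snoc_last, sufN_snoc_castSucc, sufN_last]
  rw [mul_comm]
  congr 1
  · congr 1
    rw [Nat.cast_sub (by omega : 1 ≤ s)]
    push_cast
    ring
  · refine Finset.prod_congr rfl fun i _ => ?_
    congr 1
    ring

lemma sum_Icc_one {M : Type*} [AddCommMonoid M] (k : ℕ) (g : ℕ → M) :
    ∑ p ∈ Finset.Icc 1 k, g p = ∑ p ∈ Finset.range k, g (p + 1) := by
  rw [← Finset.Ico_add_one_right_eq_Icc, Finset.sum_Ico_eq_sum_range]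
  exact Finset.sum_congr (by norm_num) fun i _ => by rw [Nat.add_comm]

lemma cN00 : cN 0 0 = {fun i => i.elim0} := by
  ext f
  simp only [mem_cN, Finset.mem_singleton]
  constructor
  · intro _; funext i; exact i.elim0
  · intro _; exact ⟨fun i => i.elim0, by simp⟩

lemma lamN0 (t : ℕ) : lamN t 0 = {fun i => i.elim0} := by
  ext f
  simp only [mem_lamN, Finset.mem_singleton]
  constructor
  · intro _; funext i; exact i.elim0
  · intro _; exact ⟨fun i => i.elim0, fun i => i.elim0⟩

lemma Bpart {R : Type*} [CommRing R] (x : ℕ → ℤ → R) (n h : ℤ) (k s : ℕ)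
    (hk : 1 ≤ k) (hs : 2 ≤ s) :
    ∑ p ∈ Finset.Icc 1 k, ∑ K ∈ cN k p,
        ∑ l ∈ (lamN s p).filter (fun l => ¬ ∀ i, l i < s - 1), termF x n h K l
      = (∑ j ∈ Finset.Ico 1 k, x j (((s : ℤ) - 1) * h) *
          ∑ p ∈ Finset.Icc 1 (k - j), ∑ K ∈ cN (k - j) p, ∑ l ∈ lamN (s - 1) p,
            termF (shiftVar x ((j : ℤ) * n)) n h K l)
        + x k (((s : ℤ) - 1) * h) := by
  calc
    ∑ p ∈ Finset.Icc 1 k, ∑ K ∈ cN k p,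
        ∑ l ∈ (lamN s p).filter (fun l => ¬ ∀ i, l i < s - 1), termF x n h K l
      = ∑ p ∈ Finset.range k, ∑ K ∈ cN k (p + 1),
          ∑ l ∈ (lamN s (p + 1)).filter (fun l => ¬ ∀ i, l i < s - 1), termF x n h K l :=
        sum_Icc_one k _
    _ = ∑ p ∈ Finset.range k, ∑ K ∈ cN k (p + 1),
          ∑ l' ∈ lamN (s - 1) p, termF x n h K (Fin.snoc l' (s - 1)) := by
        refine Finset.sum_congr rfl fun p _ => Finset.sum_congr rfl fun K _ => ?_
        exact sum_lamN_top s p hs (termF x n h K)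
    _ = ∑ p ∈ Finset.range k, ∑ j ∈ Finset.Icc 1 k, ∑ K' ∈ cN (k - j) p,
          ∑ l' ∈ lamN (s - 1) p, termF x n h (Fin.snoc K' j) (Fin.snoc l' (s - 1)) := by
        refine Finset.sum_congr rfl fun p _ => ?_
        exact sum_cN_succ k p (fun K => ∑ l' ∈ lamN (s - 1) p, termF x n h K (Fin.snoc l' (s - 1)))
    _ = ∑ p ∈ Finset.range k, ∑ j ∈ Finset.Icc 1 k, ∑ K' ∈ cN (k - j) p,
          ∑ l' ∈ lamN (s - 1) p,
            x j (((s : ℤ) - 1) * h) * termF (shiftVar x ((j : ℤ) * n)) n h K' l' := by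
        refine Finset.sum_congr rfl fun p _ => Finset.sum_congr rfl fun j _ =>
          Finset.sum_congr rfl fun K' _ => Finset.sum_congr rfl fun l' _ => ?_
        exact termF_snoc x n h s hs j K' l'
    _ = ∑ j ∈ Finset.Icc 1 k, ∑ p ∈ Finset.range k, ∑ K' ∈ cN (k - j) p,
          ∑ l' ∈ lamN (s - 1) p,
            x j (((s : ℤ) - 1) * h) * termF (shiftVar x ((j : ℤ) * n)) n h K' l' :=
        Finset.sum_comm
    _ = ∑ j ∈ Finset.Icc 1 k, x j (((s : ℤ) - 1) * h) *
          ∑ p ∈ Finset.range k, ∑ K' ∈ cN (k - j) p, ∑ l' ∈ lamN (s - 1) p,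
            termF (shiftVar x ((j : ℤ) * n)) n h K' l' := by
        refine Finset.sum_congr rfl fun j _ => ?_
        simp only [← Finset.mul_sum]
    _ = (∑ j ∈ Finset.Ico 1 k, x j (((s : ℤ) - 1) * h) *
          ∑ p ∈ Finset.range k, ∑ K' ∈ cN (k - j) p, ∑ l' ∈ lamN (s - 1) p,
            termF (shiftVar x ((j : ℤ) * n)) n h K' l')
        + x k (((s : ℤ) - 1) * h) *
          ∑ p ∈ Finset.range k, ∑ K' ∈ cN (k - k) p, ∑ l' ∈ lamN (s - 1) p,
            termF (shiftVar x ((k : ℤ) * n)) n h K' l' := by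
        have hins : Finset.Icc 1 k = insert k (Finset.Ico 1 k) := by
          ext t; simp only [Finset.mem_Icc, Finset.mem_insert, Finset.mem_Ico]; omega
        rw [hins, Finset.sum_insert (by simp), add_comm]
    _ = (∑ j ∈ Finset.Ico 1 k, x j (((s : ℤ) - 1) * h) *
          ∑ p ∈ Finset.Icc 1 (k - j), ∑ K ∈ cN (k - j) p, ∑ l ∈ lamN (s - 1) p,
            termF (shiftVar x ((j : ℤ) * n)) n h K l)
        + x k (((s : ℤ) - 1) * h) := by
        congr 1
        · refine Finset.sum_congr rfl fun j hj => ?_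
          rw [Finset.mem_Ico] at hj
          congr 1
          refine (Finset.sum_subset ?_ ?_).symm
          · intro p hp
            rw [Finset.mem_Icc] at hp
            rw [Finset.mem_range]
            omega
          · intro p hp hnp
            rw [Finset.mem_range] at hp
            rw [Finset.mem_Icc] at hnp
            have : cN (k - j) p = ∅ := by
              apply cN_eq_empty
              omega
            rw [this, Finset.sum_empty]
        · rw [Nat.sub_self]
          have h0 : ∀ p ∈ Finset.range k, p ≠ 0 →
              (∑ K' ∈ cN 0 p, ∑ l' ∈ lamN (s - 1) p,
                termF (shiftVar x ((k : ℤ) * n)) n h K' l') = 0 := by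
            intro p _ hp
            rw [cN_eq_empty (Or.inl (by omega)), Finset.sum_empty]
          rw [Finset.sum_eq_single_of_mem 0 (Finset.mem_range.2 (by omega)) h0]
          rw [cN00, lamN0, Finset.sum_singleton, Finset.sum_singleton]
          simp [termF]
/-- `S^k_s = S^k_{s-1} + Σ_{j=1}^{k-1} x^j_{(s-1)h} S^{k-j, jn}_{s-1} + x^k_{(s-1)h}`. -/
theorem SpolyX_rec {R : Type*} [CommRing R] (x : ℕ → ℤ → R) (n h : ℤ)
    (hn : 1 ≤ n) (hh : 1 ≤ h) (k s : ℕ) (hk : 1 ≤ k) (hs : 2 ≤ s) :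
    SpolyX x n h k s =
      SpolyX x n h k (s - 1) +
        (∑ j ∈ Finset.Ico 1 k,
          x j (((s : ℤ) - 1) * h) * SpolyX (shiftVar x ((j : ℤ) * n)) n h (k - j) (s - 1)) +
        x k (((s : ℤ) - 1) * h) := by
  have e1 : ∀ (p : ℕ) (K : Fin p → ℕ),
      ∑ l ∈ lamN s p, termF x n h K l
        = (∑ l ∈ lamN (s - 1) p, termF x n h K l)
          + ∑ l ∈ (lamN s p).filter (fun l => ¬ ∀ i, l i < s - 1), termF x n h K l := by
    intro p K
    rw [← lamN_filter_lt s p]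
    exact (Finset.sum_filter_add_sum_filter_not (lamN s p) (fun l => ∀ i, l i < s - 1) _).symm
  rw [SpolyX_eq x n h k s (by omega)]
  calc
    ∑ p ∈ Finset.Icc 1 k, ∑ K ∈ cN k p, ∑ l ∈ lamN s p, termF x n h K l
      = (∑ p ∈ Finset.Icc 1 k, ∑ K ∈ cN k p, ∑ l ∈ lamN (s - 1) p, termF x n h K l)
        + ∑ p ∈ Finset.Icc 1 k, ∑ K ∈ cN k p,
            ∑ l ∈ (lamN s p).filter (fun l => ¬ ∀ i, l i < s - 1), termF x n h K l := by
        rw [← Finset.sum_add_distrib]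
        refine Finset.sum_congr rfl fun p _ => ?_
        rw [← Finset.sum_add_distrib]
        exact Finset.sum_congr rfl fun K _ => e1 p K
    _ = (∑ p ∈ Finset.Icc 1 k, ∑ K ∈ cN k p, ∑ l ∈ lamN (s - 1) p, termF x n h K l)
        + ((∑ j ∈ Finset.Ico 1 k, x j (((s : ℤ) - 1) * h) *
            ∑ p ∈ Finset.Icc 1 (k - j), ∑ K ∈ cN (k - j) p, ∑ l ∈ lamN (s - 1) p,
              termF (shiftVar x ((j : ℤ) * n)) n h K l)
          + x k (((s : ℤ) - 1) * h)) := by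
        rw [Bpart x n h k s hk hs]
    _ = SpolyX x n h k (s - 1) +
          (∑ j ∈ Finset.Ico 1 k,
            x j (((s : ℤ) - 1) * h) * SpolyX (shiftVar x ((j : ℤ) * n)) n h (k - j) (s - 1)) +
          x k (((s : ℤ) - 1) * h) := by
        rw [← add_assoc]
        congr 1
        congr 1
        · exact (SpolyX_eq x n h k (s - 1) (by omega)).symm
        · refine Finset.sum_congr rfl fun j hj => ?_
          congr 1
          exact (SpolyX_eq (shiftVar x ((j : ℤ) * n)) n h (k - j) (s - 1) (by omega)).symm
end
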